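/- When X ∪ Z equals the full parent set of Y in a Bayesian network, the interventional conditional probabilities in the natural direct effect reduce to observational ones: NDE_{X: 0→1}(Y) = Σ_z [P(Y=1 | X=1, z) − P(Y=1 | X=0, z)] P(z | do(X=0)). -/

import Mathlib

open scoped Classical

lemma key_sum {n : ℕ} (parents : Fin n → Finset (Fin n))
    (cpt : Fin n → Bool → (Fin n → Bool) → ℝ)
    (hdag : ∀ i, ∀ j ∈ parents i, j < i)
    (hdep : ∀ i b (s s' : Fin n → Bool), (∀ j ∈ parents i, s j = s' j) →
      cpt i b s = cpt i b s')
    (hsum : ∀ i s, cpt i true s + cpt i false s = 1)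
    (F : Finset (Fin n)) (base : Fin n → Bool) :
    ∑ s : Fin n → Bool,
      (if ∀ j ∉ F, s j = base j then ∏ j ∈ F, cpt j (s j) s else 0) = 1 := by
  induction F using Finset.strongInduction generalizing base with
  | _ F ih =>
    rcases F.eq_empty_or_nonempty with rfl | hne
    · have h1 : ∀ s : Fin n → Bool,
          (∀ j ∉ (∅ : Finset (Fin n)), s j = base j) ↔ s = base := by
        intro s
        constructor
        · intro h; funext j; exact h j (Finset.notMem_empty j)
        · intro h j _; rw [h]
      simp only [h1, Finset.prod_empty]
      simp
    · set m := F.max' hne with hm_def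
      have hm : m ∈ F := F.max'_mem hne
      have hle : ∀ j ∈ F, j ≤ m := fun j hj => F.le_max' j hj
      set g : (Fin n → Bool) → ℝ := fun s =>
        if ∀ j ∉ F, s j = base j then ∏ j ∈ F, cpt j (s j) s else 0 with hg
      have e_invol : Function.Involutive
          (fun s : Fin n → Bool => Function.update s m (!(s m))) := by
        intro s; funext j
        by_cases hj : j = m
        · subst hj; simp
        · simp [Function.update_of_ne hj]
      have hsplit : ∑ s : Fin n → Bool, g s =
          ∑ s : Fin n → Bool,
            (if s m = base m then
              g s + g (Function.update s m (!(base m))) else 0) := by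
        have h1 : ∀ s : Fin n → Bool, g s =
            (if s m = base m then g s else 0) +
            (if s m = !(base m) then g s else 0) := by
          intro s
          cases h : s m <;> cases h2 : base m <;> simp [h, h2]
        rw [Finset.sum_congr rfl (fun s _ => h1 s), Finset.sum_add_distrib]
        have h2 : ∑ s : Fin n → Bool, (if s m = !(base m) then g s else 0) =
            ∑ s : Fin n → Bool,
              (if s m = base m then g (Function.update s m (!(base m))) else 0) := by
          rw [← Fintype.sum_bijective _ e_invol.bijective _
            (fun s => if s m = !(base m) then g s else 0) (fun s => rfl)]
          refine Finset.sum_congr rfl fun s _ => ?_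
          have hval : (Function.update s m (!(s m))) m = !(s m) := by simp
          rw [hval]
          by_cases hs : s m = base m
          · rw [if_pos (by rw [hs]), if_pos hs, hs]
          · rw [if_neg (by
              intro hcon
              exact hs (by cases h : s m <;> cases h2 : base m <;>
                simp_all)), if_neg hs]
        rw [h2, ← Finset.sum_add_distrib]
        refine Finset.sum_congr rfl fun s _ => ?_
        by_cases hs : s m = base m <;> simp [hs]
      rw [hsplit]
      have hinner : ∀ s : Fin n → Bool,
          (if s m = base m then
            g s + g (Function.update s m (!(base m))) else 0) =
          (if ∀ j ∉ F.erase m, s j = base j then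
            ∏ j ∈ F.erase m, cpt j (s j) s else 0) := by
        intro s
        by_cases hs : s m = base m
        · rw [if_pos hs]
          set u : Fin n → Bool := Function.update s m (!(base m)) with hu
          by_cases hP : ∀ j ∉ F, s j = base j
          · have hPu : ∀ j ∉ F, u j = base j := by
              intro j hj
              have hjm : j ≠ m := fun h => hj (h ▸ hm)
              rw [hu, Function.update_of_ne hjm]
              exact hP j hj
            have hP' : ∀ j ∉ F.erase m, s j = base j := by
              intro j hj
              by_cases hjm : j = m
              · subst hjm; exact hs
              · exact hP j (fun hjF => hj (Finset.mem_erase.2 ⟨hjm, hjF⟩))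
            rw [hg]
            simp only [if_pos hP, if_pos hPu, if_pos hP']
            have hum : u m = !(base m) := by rw [hu]; simp
            have h2 : ∀ j ∈ F.erase m, cpt j (u j) u = cpt j (s j) s := by
              intro j hj
              have hjm : j ≠ m := Finset.ne_of_mem_erase hj
              have hjF : j ∈ F := Finset.mem_of_mem_erase hj
              have hjlt : j < m := lt_of_le_of_ne (hle j hjF) hjm
              rw [hu, Function.update_of_ne hjm]
              exact hdep j (s j) u s (fun k hk => by
                rw [hu, Function.update_of_ne (ne_of_lt (lt_trans (hdag j k hk) hjlt))])
            have h3 : cpt m (u m) u = cpt m (!(base m)) s := by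
              rw [hum]
              exact hdep m _ u s (fun k hk => by
                rw [hu, Function.update_of_ne (ne_of_lt (hdag m k hk))])
            rw [← Finset.mul_prod_erase F (fun j => cpt j (s j) s) hm,
                ← Finset.mul_prod_erase F (fun j => cpt j (u j) u) hm,
                Finset.prod_congr rfl h2, h3, hs]
            rw [← add_mul]
            have h4 : cpt m (base m) s + cpt m (!(base m)) s = 1 := by
              cases hb : base m
              · rw [add_comm]; simpa using hsum m s
              · simpa using hsum m s
            rw [h4, one_mul]
          · have hPu : ¬ ∀ j ∉ F, u j = base j := by
              intro hcon
              exact hP (fun j hj => by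
                have hjm : j ≠ m := fun h => hj (h ▸ hm)
                have := hcon j hj
                rwa [hu, Function.update_of_ne hjm] at this)
            have hP' : ¬ ∀ j ∉ F.erase m, s j = base j := by
              intro hcon
              exact hP (fun j hj => hcon j (fun hje => hj (Finset.mem_of_mem_erase hje)))
            rw [hg]
            simp only [if_neg hP, if_neg hPu, if_neg hP', add_zero]
        · rw [if_neg hs, if_neg (fun hcon : ∀ j ∉ F.erase m, s j = base j =>
            hs (hcon m (Finset.notMem_erase m F)))]
      rw [Finset.sum_congr rfl (fun s _ => hinner s)]
      exact ih (F.erase m) (Finset.erase_ssubset hm) base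

/-- When `{X} ∪ Z` is the full parent set of `Y`, the
interventional expectations in the natural direct effect reduce to
observational conditional probabilities:
`NDE_{X:0→1}(Y) = Σ_z [P(Y=1 | X=1, z) − P(Y=1 | X=0, z)] P(z | do(X=0))`.
Here `E(Y | do(x, z))` is computed from the truncated factorization with all
parents of `Y` fixed (`X` to `x` and the rest to `z`), and
`P(Y=1 | X=x, z) = cpt Y true` evaluated at the corresponding parent
assignment. -/
theorem stmt_10 {n : ℕ} (parents : Fin n → Finset (Fin n))
    (cpt : Fin n → Bool → (Fin n → Bool) → ℝ)
    (hdag : ∀ i, ∀ j ∈ parents i, j < i)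
    (hdep : ∀ i b (s s' : Fin n → Bool), (∀ j ∈ parents i, s j = s' j) →
      cpt i b s = cpt i b s')
    (hnn : ∀ i b s, 0 ≤ cpt i b s)
    (hsum : ∀ i s, cpt i true s + cpt i false s = 1)
    (Y X : Fin n) (hX : X ∈ parents Y)
    (w : (Fin n → Bool) → ℝ)  -- w z = P(z | do(X = 0))
    (hw : ∀ z, 0 ≤ w z) :
    -- E(Y = 1 | do(X = x, z)) via the truncated factorization:
    let Edo : Bool → (Fin n → Bool) → ℝ := fun x z =>
      ∑ s : Fin n → Bool,
        if (s X = x ∧ ∀ j ∈ parents Y, j ≠ X → s j = z j) ∧ s Y = true then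
          ∏ j ∈ Finset.univ.filter (fun j => j ∉ parents Y), cpt j (s j) s
        else 0
    -- the parent assignment with X set to x and the other parents set as in z:
    let a : Bool → (Fin n → Bool) → (Fin n → Bool) := fun x z j =>
      if j = X then x else z j
    ∑ z : Fin n → Bool, (Edo true z - Edo false z) * w z =
      ∑ z : Fin n → Bool,
        (cpt Y true (a true z) - cpt Y true (a false z)) * w z := by
  intro Edo a
  have hYnp : Y ∉ parents Y := fun h => absurd (hdag Y Y h) (lt_irrefl Y)
  have hXY : X ≠ Y := fun h => hYnp (h ▸ hX)
  have hEdo : ∀ (x : Bool) (z : Fin n → Bool), Edo x z = cpt Y true (a x z) := by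
    intro x z
    set G : Finset (Fin n) := Finset.univ.filter (fun j => j ∉ parents Y) with hG
    have hYG : Y ∈ G := by simp [hG, hYnp]
    set F : Finset (Fin n) := G.erase Y with hF
    set base : Fin n → Bool := fun j =>
      if j = Y then true else if j = X then x else z j with hbase
    have hmemF : ∀ j : Fin n, j ∉ F ↔ (j = Y ∨ j ∈ parents Y) := by
      intro j
      constructor
      · intro hj
        by_cases hjY : j = Y
        · exact Or.inl hjY
        · right
          by_contra hjp
          exact hj (Finset.mem_erase.2 ⟨hjY, by simp [hG, hjp]⟩)
      · rintro (rfl | hjp)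
        · exact Finset.notMem_erase _ G
        · intro hjF
          have := Finset.mem_of_mem_erase hjF
          simp [hG] at this
          exact this hjp
    have hcond : ∀ s : Fin n → Bool,
        (((s X = x ∧ ∀ j ∈ parents Y, j ≠ X → s j = z j) ∧ s Y = true) ↔
          (∀ j ∉ F, s j = base j)) := by
      intro s
      constructor
      · rintro ⟨⟨hx, hz⟩, hy⟩ j hj
        rcases (hmemF j).1 hj with rfl | hjp
        · simp [hbase, hy]
        · have hjY : j ≠ Y := ne_of_lt (hdag Y j hjp)
          by_cases hjX : j = X
          · subst hjX; simp [hbase, hXY, hx]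
          · simp [hbase, hjY, hjX, hz j hjp hjX]
      · intro h
        have hXF : X ∉ F := (hmemF X).2 (Or.inr hX)
        have hYF : Y ∉ F := (hmemF Y).2 (Or.inl rfl)
        refine ⟨⟨?_, ?_⟩, ?_⟩
        · have := h X hXF
          simpa [hbase, hXY] using this
        · intro j hjp hjX
          have hjY : j ≠ Y := ne_of_lt (hdag Y j hjp)
          have := h j ((hmemF j).2 (Or.inr hjp))
          simpa [hbase, hjY, hjX] using this
        · have := h Y hYF
          simpa [hbase] using this
    have hterm : ∀ s : Fin n → Bool,
        (if ((s X = x ∧ ∀ j ∈ parents Y, j ≠ X → s j = z j) ∧ s Y = true) then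
          ∏ j ∈ G, cpt j (s j) s else 0) =
        cpt Y true (a x z) *
          (if ∀ j ∉ F, s j = base j then ∏ j ∈ F, cpt j (s j) s else 0) := by
      intro s
      by_cases hc : ∀ j ∉ F, s j = base j
      · rw [if_pos ((hcond s).2 hc), if_pos hc]
        rw [← Finset.mul_prod_erase G (fun j => cpt j (s j) s) hYG, ← hF]
        have hsY : s Y = true := by
          have := hc Y ((hmemF Y).2 (Or.inl rfl)); simpa [hbase] using this
        have hcpt : cpt Y (s Y) s = cpt Y true (a x z) := by
          rw [hsY]
          refine hdep Y true s (a x z) (fun j hjp => ?_)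
          have hjY : j ≠ Y := ne_of_lt (hdag Y j hjp)
          have := hc j ((hmemF j).2 (Or.inr hjp))
          rw [this]
          simp [hbase, a, hjY]
        rw [hcpt]
      · rw [if_neg (fun hcon => hc ((hcond s).1 hcon)), if_neg hc, mul_zero]
    calc Edo x z = ∑ s : Fin n → Bool,
        cpt Y true (a x z) *
          (if ∀ j ∉ F, s j = base j then ∏ j ∈ F, cpt j (s j) s else 0) :=
        Finset.sum_congr rfl (fun s _ => hterm s)
      _ = cpt Y true (a x z) *
          ∑ s : Fin n → Bool,
            (if ∀ j ∉ F, s j = base j then ∏ j ∈ F, cpt j (s j) s else 0) :=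
        (Finset.mul_sum _ _ _).symm
      _ = cpt Y true (a x z) := by
          rw [key_sum parents cpt hdag hdep hsum F base, mul_one]
  refine Finset.sum_congr rfl fun z _ => ?_
  rw [hEdo true z, hEdo false z]
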